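/- The DA-OA mechanism is incentive-compatible: for every profile (P, T) of true preferences and true category memberships, every individual i, and every misreport (P̃_i, t̃_i) with t̃_i ∈ {t(i), GC}, the institution i receives under DA-OA at the truthful profile is weakly preferred by i (under the true P_i) to the institution i receives under DA-OA at the profile where i reports (P̃_i, t̃_i) and all others report truthfully. -/

import Mathlib

open Finset

/- `α` : individuals, `σ` : institutions, `ρ` : reserve categories.
Merit at institution `s` is given by an injective score `score s : α → ℕ`
(higher score = higher merit, `i ≻_s j` iff `score s j < score s i`).
Reported category membership is `τ : α → Option ρ` (`none` = general
category).  Preferences of individual `i` over `Option σ` (`none` = being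
unassigned) are given by an injective utility `ui i : Option σ → ℕ`. -/
variable {α σ ρ : Type*} [Fintype α] [DecidableEq α]
  [Fintype σ] [DecidableEq σ] [Fintype ρ] [DecidableEq ρ]

/-- The top-`k` elements of `A` under score `f`: members of `A` with fewer
than `k` strictly higher-scored elements of `A` (all of `A` if `|A| ≤ k`). -/
def topk (k : ℕ) (f : α → ℕ) (A : Finset α) : Finset α :=
  A.filter fun i => (A.filter fun j => f i < f j).card < k

/-- Open-category selection of institution `s`'s over-and-above choice rule. -/
def oaOpen (acc : σ → Finset α) (score : σ → α → ℕ) (qo : σ → ℕ)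
    (s : σ) (A : Finset α) : Finset α :=
  topk (qo s) (score s) (A ∩ acc s)

/-- Category-`r` selection of institution `s`'s over-and-above choice rule. -/
def oaRes (acc : σ → Finset α) (score : σ → α → ℕ) (qo : σ → ℕ)
    (q : σ → ρ → ℕ) (τ : α → Option ρ) (s : σ) (r : ρ) (A : Finset α) :
    Finset α :=
  topk (q s r) (score s)
    (((A ∩ acc s) \ oaOpen acc score qo s A).filter fun i => τ i = some r)

/-- The set chosen by institution `s`'s over-and-above choice rule. -/
def oaChosen (acc : σ → Finset α) (score : σ → α → ℕ) (qo : σ → ℕ)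
    (q : σ → ρ → ℕ) (τ : α → Option ρ) (s : σ) (A : Finset α) : Finset α :=
  oaOpen acc score qo s A ∪
    Finset.univ.biUnion fun r => oaRes acc score qo q τ s r A

/-- An assignment: each individual gets `none` (unassigned) or a pair
`(s, c)` of an institution and a category (`c = none` is the open category),
such that reserved positions only go to individuals of the corresponding
reported category, all assigned individuals are acceptable at their
institution, and category capacities are respected. -/
def IsAssignment (acc : σ → Finset α) (qo : σ → ℕ) (q : σ → ρ → ℕ)
    (τ : α → Option ρ) (η : α → Option (σ × Option ρ)) : Prop :=
  (∀ i s c, η i = some (s, c) → c = none ∨ c = τ i) ∧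
  (∀ i s c, η i = some (s, c) → i ∈ acc s) ∧
  (∀ s, (Finset.univ.filter fun i => η i = some (s, none)).card ≤ qo s) ∧
  (∀ s r, (Finset.univ.filter fun i => η i = some (s, some r)).card ≤ q s r)

/-- The matching induced by an assignment: the institution of `i`, if any. -/
def mu (η : α → Option (σ × Option ρ)) (i : α) : Option σ :=
  (η i).map Prod.fst

/-- The set of individuals matched to institution `s`. -/
def muS (η : α → Option (σ × Option ρ)) (s : σ) : Finset α :=
  Finset.univ.filter fun i => (η i).map Prod.fst = some s

/-- Individual rationality: everyone weakly prefers their assignment to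
being unassigned. -/
def IndRational (ui : α → Option σ → ℕ) (η : α → Option (σ × Option ρ)) :
    Prop :=
  ∀ i, ui i none ≤ ui i (mu η i)

/-- Within-category fairness of an assignment: whenever `i` strictly prefers
`s` to their assignment, every open-category position at `s` is held by a
higher-merit individual and, if `i` has reported reserve category `r`, every
category-`r` position at `s` is held by a higher-merit individual. -/
def WithinCatFair (score : σ → α → ℕ) (τ : α → Option ρ)
    (ui : α → Option σ → ℕ) (η : α → Option (σ × Option ρ)) : Prop :=
  ∀ i s, ui i (mu η i) < ui i (some s) →
    (∀ j, η j = some (s, none) → score s i < score s j) ∧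
    (∀ r, τ i = some r → ∀ j, η j = some (s, some r) → score s i < score s j)

/-- Non-wastefulness of an assignment: whenever `i` strictly prefers `s` to
their assignment and is acceptable at `s`, all positions `i` is eligible for
at `s` are exhausted. -/
def NonWasteful (acc : σ → Finset α) (qo : σ → ℕ) (q : σ → ρ → ℕ)
    (τ : α → Option ρ) (ui : α → Option σ → ℕ)
    (η : α → Option (σ × Option ρ)) : Prop :=
  ∀ i s, ui i (mu η i) < ui i (some s) → i ∈ acc s →
    (Finset.univ.filter fun j => η j = some (s, none)).card = qo s ∧
    (∀ r, τ i = some r →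
      (Finset.univ.filter fun j => η j = some (s, some r)).card = q s r)

/-- The over-and-above principle for an assignment: at each institution, every
holder of an open-category position has higher merit than every holder of a
reserve-category position. -/
def OverAndAbove (score : σ → α → ℕ) (η : α → Option (σ × Option ρ)) : Prop :=
  ∀ s i j (r : ρ), η i = some (s, none) → η j = some (s, some r) →
    score s j < score s i

/-- The best (reported-)acceptable institution of individual `i` that has not
yet rejected `i` (rejections recorded in `D`); `none` if there is none. -/
noncomputable def best (ui : α → Option σ → ℕ) (i : α) (D : Finset σ) : Option σ :=
  ((Finset.univ.filter fun s => s ∉ D ∧ ui i none < ui i (some s)).toList).argmax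
    fun s => ui i (some s)

/-- The applicants of institution `s` in the current step of deferred
acceptance, given the rejections `D` so far. -/
noncomputable def apps (ui : α → Option σ → ℕ) (D : α → Finset σ) (s : σ) : Finset α :=
  Finset.univ.filter fun i => best ui i (D i) = some s

/-- One step of the DA-OA algorithm: each individual proposes to their best
institution that has not rejected them yet, and each institution `s` rejects
the proposers not chosen by its over-and-above choice rule. -/
noncomputable def daStep (acc : σ → Finset α) (score : σ → α → ℕ) (qo : σ → ℕ)
    (q : σ → ρ → ℕ) (τ : α → Option ρ) (ui : α → Option σ → ℕ)
    (D : α → Finset σ) : α → Finset σ := fun i =>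
  D i ∪ Finset.univ.filter fun s =>
    best ui i (D i) = some s ∧ i ∉ oaChosen acc score qo q τ s (apps ui D s)

/-- The rejection state of the DA-OA algorithm after enough steps to
guarantee that a fixed point (no further rejections) has been reached. -/
noncomputable def daState (acc : σ → Finset α) (score : σ → α → ℕ) (qo : σ → ℕ)
    (q : σ → ρ → ℕ) (τ : α → Option ρ) (ui : α → Option σ → ℕ) :
    α → Finset σ :=
  (daStep acc score qo q τ ui)^[Fintype.card α * Fintype.card σ + 1]
    fun _ => ∅

/-- The outcome of the DA-OA mechanism: each individual finally held by an
institution is assigned the institution-category pair under which the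
over-and-above choice rule last selected them; everyone else gets `none`. -/
noncomputable def daAssign (acc : σ → Finset α) (score : σ → α → ℕ) (qo : σ → ℕ)
    (q : σ → ρ → ℕ) (τ : α → Option ρ) (ui : α → Option σ → ℕ) :
    α → Option (σ × Option ρ) := fun i =>
  match best ui i (daState acc score qo q τ ui i) with
  | none => none
  | some s =>
    if i ∈ oaOpen acc score qo s (apps ui (daState acc score qo q τ ui) s) then
      some (s, none)
    else
      match τ i with
      | none => none
      | some r =>
        if i ∈ oaRes acc score qo q τ s r
            (apps ui (daState acc score qo q τ ui) s) then
          some (s, some r)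
        else none
set_option linter.unusedSectionVars false

/-! ### Auxiliary lemmas -/

section Aux

variable {acc : σ → Finset α} {score : σ → α → ℕ} {qo : σ → ℕ} {q : σ → ρ → ℕ}
  {τ : α → Option ρ} {u : α → Option σ → ℕ}

/-! #### topk -/

lemma topk_subset {k : ℕ} {f : α → ℕ} {A : Finset α} : topk k f A ⊆ A :=
  filter_subset _ _

lemma mem_topk {k : ℕ} {f : α → ℕ} {A : Finset α} {j : α} :
    j ∈ topk k f A ↔ j ∈ A ∧ (A.filter fun x => f j < f x).card < k :=
  mem_filter

lemma topk_mono_sets {k : ℕ} {f : α → ℕ} {A B : Finset α} (hAB : A ⊆ B) {j : α}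
    (hj : j ∈ topk k f B) (hjA : j ∈ A) : j ∈ topk k f A := by
  rw [mem_topk] at hj ⊢
  exact ⟨hjA, lt_of_le_of_lt (card_le_card (filter_subset_filter _ hAB)) hj.2⟩

lemma topk_card {k : ℕ} {f : α → ℕ} (hf : Function.Injective f) (A : Finset α) :
    (topk k f A).card = min k A.card := by
  classical
  set rank : α → ℕ := fun x => (A.filter fun y => f x < f y).card with hrank
  have hinj : Set.InjOn rank A := by
    intro x hx y hy hxy
    by_contra hne
    have key : ∀ a b : α, a ∈ A → b ∈ A → f a < f b → rank b < rank a := by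
      intro a b ha hb hab
      have hsub : insert b (A.filter fun z => f b < f z) ⊆ A.filter fun z => f a < f z := by
        intro z hz
        rcases mem_insert.mp hz with rfl | hz
        · exact mem_filter.mpr ⟨hb, hab⟩
        · exact mem_filter.mpr ⟨(mem_filter.mp hz).1, hab.trans (mem_filter.mp hz).2⟩
      have hb' : b ∉ (A.filter fun z => f b < f z) := by
        simp [mem_filter]
      calc rank b < rank b + 1 := Nat.lt_succ_self _
        _ = (insert b (A.filter fun z => f b < f z)).card := by
            rw [card_insert_of_notMem hb']
        _ ≤ rank a := card_le_card hsub
    rcases lt_trichotomy (f x) (f y) with h | h | h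
    · exact absurd hxy (Nat.ne_of_gt (key x y hx hy h))
    · exact hne (hf h)
    · exact absurd hxy (Nat.ne_of_lt (key y x hy hx h))
  have himage : A.image rank = Finset.range A.card := by
    apply Finset.eq_of_subset_of_card_le
    · intro v hv
      rcases Finset.mem_image.mp hv with ⟨x, hx, rfl⟩
      have hss : (A.filter fun y => f x < f y) ⊂ A := by
        refine Finset.ssubset_iff_of_subset (filter_subset _ _) |>.mpr ⟨x, hx, ?_⟩
        simp
      exact Finset.mem_range.mpr (card_lt_card hss)
    · rw [Finset.card_range, Finset.card_image_of_injOn hinj]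
  have htopk : topk k f A = A.filter fun x => rank x < k := rfl
  have himg2 : (A.filter fun x => rank x < k).image rank
      = (Finset.range A.card).filter (· < k) := by
    rw [← himage, Finset.filter_image]
  have hcard1 : (topk k f A).card = ((Finset.range A.card).filter (· < k)).card := by
    rw [htopk, ← himg2]
    exact (Finset.card_image_of_injOn (hinj.mono (by intro x hx; exact (mem_filter.mp hx).1))).symm
  rw [hcard1]
  have hrg : (Finset.range A.card).filter (· < k) = Finset.range (min A.card k) := by
    ext a
    simp only [mem_filter, mem_range, lt_min_iff]
  rw [hrg, Finset.card_range, Nat.min_comm]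

lemma topk_irc {k : ℕ} {f : α → ℕ} (hf : Function.Injective f) {B Z : Finset α}
    (h1 : topk k f B ⊆ Z) (h2 : Z ⊆ B) : topk k f Z = topk k f B := by
  apply Finset.Subset.antisymm
  · intro j hj
    by_contra hjB
    have hjZ := (mem_topk.mp hj).1
    have hjB' : j ∈ B := h2 hjZ
    have hrank : k ≤ (B.filter fun x => f j < f x).card :=
      le_of_not_gt (fun hc => hjB (mem_topk.mpr ⟨hjB', hc⟩))
    have hsub : topk k f B ⊆ Z.filter fun x => f j < f x := by
      intro v hv
      have hvB := topk_subset hv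
      have hfv : f j < f v := by
        rcases lt_trichotomy (f j) (f v) with h | h | h
        · exact h
        · exact absurd (show j ∈ topk k f B by rwa [hf h]) hjB
        · exfalso
          have hsub2 : insert j (B.filter fun x => f j < f x) ⊆ B.filter fun x => f v < f x := by
            intro z hz
            rcases mem_insert.mp hz with rfl | hz
            · exact mem_filter.mpr ⟨hjB', h⟩
            · exact mem_filter.mpr ⟨(mem_filter.mp hz).1, h.trans (mem_filter.mp hz).2⟩
          have hj' : j ∉ (B.filter fun x => f j < f x) := by simp
          have : k + 1 ≤ (B.filter fun x => f v < f x).card := by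
            calc k + 1 ≤ (B.filter fun x => f j < f x).card + 1 := by omega
              _ = (insert j (B.filter fun x => f j < f x)).card := by
                  rw [card_insert_of_notMem hj']
              _ ≤ _ := card_le_card hsub2
          have hvk := (mem_topk.mp hv).2
          omega
      exact mem_filter.mpr ⟨h1 hv, hfv⟩
    have hBcard : k + 1 ≤ B.card := by
      have hss : (B.filter fun x => f j < f x) ⊆ B.erase j := by
        intro z hz
        rcases mem_filter.mp hz with ⟨hzB, hzf⟩
        exact mem_erase.mpr ⟨fun h => by simp [h] at hzf, hzB⟩
      have h5 := card_le_card hss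
      have h6 : (B.erase j).card = B.card - 1 := Finset.card_erase_of_mem hjB'
      have h7 : 1 ≤ B.card := Finset.card_pos.mpr ⟨j, hjB'⟩
      omega
    have htk : (topk k f B).card = k := by
      rw [topk_card hf]
      exact Nat.min_eq_left (by omega)
    have : k ≤ (Z.filter fun x => f j < f x).card := htk ▸ card_le_card hsub
    have := (mem_topk.mp hj).2
    omega
  · intro j hj
    exact topk_mono_sets h2 hj (h1 hj)


/-! #### the over-and-above choice rule -/

/-- The pool of category-`r` candidates. -/
def oaPool (acc : σ → Finset α) (score : σ → α → ℕ) (qo : σ → ℕ)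
    (τ : α → Option ρ) (s : σ) (r : ρ) (A : Finset α) : Finset α :=
  ((A ∩ acc s) \ oaOpen acc score qo s A).filter fun i => τ i = some r

lemma oaRes_eq (s : σ) (r : ρ) (A : Finset α) :
    oaRes acc score qo q τ s r A = topk (q s r) (score s) (oaPool acc score qo τ s r A) := rfl

lemma oaOpen_subset {s : σ} {A : Finset α} : oaOpen acc score qo s A ⊆ A ∩ acc s :=
  topk_subset

lemma oaPool_subset {s : σ} {r : ρ} {A : Finset α} :
    oaPool acc score qo τ s r A ⊆ A ∩ acc s :=
  (filter_subset _ _).trans sdiff_subset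

lemma mem_oaPool {s : σ} {r : ρ} {A : Finset α} {j : α} :
    j ∈ oaPool acc score qo τ s r A ↔
      (j ∈ A ∩ acc s ∧ j ∉ oaOpen acc score qo s A) ∧ τ j = some r := by
  unfold oaPool
  rw [mem_filter, mem_sdiff]

lemma oaRes_subset {s : σ} {r : ρ} {A : Finset α} :
    oaRes acc score qo q τ s r A ⊆ oaPool acc score qo τ s r A := topk_subset

lemma oaChosen_subset {s : σ} {A : Finset α} :
    oaChosen acc score qo q τ s A ⊆ A ∩ acc s := by
  intro x hx
  rcases mem_union.mp hx with h | h
  · exact oaOpen_subset h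
  · rcases mem_biUnion.mp h with ⟨r, _, hr⟩
    exact oaPool_subset (oaRes_subset hr)

lemma oaOpen_mono {s : σ} {X Y : Finset α} (hXY : X ⊆ Y) {j : α}
    (hj : j ∈ oaOpen acc score qo s Y) (hjX : j ∈ X) : j ∈ oaOpen acc score qo s X :=
  topk_mono_sets (inter_subset_inter hXY Subset.rfl) hj
    (mem_inter.mpr ⟨hjX, (mem_inter.mp (oaOpen_subset hj)).2⟩)

lemma oaPool_mono {s : σ} {r : ρ} {X Y : Finset α} (hXY : X ⊆ Y) :
    oaPool acc score qo τ s r X ⊆ oaPool acc score qo τ s r Y := by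
  intro k hk
  rcases mem_oaPool.mp hk with ⟨⟨hk1, hk2⟩, hk3⟩
  refine mem_oaPool.mpr ⟨⟨inter_subset_inter hXY Subset.rfl hk1, fun hc => ?_⟩, hk3⟩
  exact hk2 (oaOpen_mono hXY hc (mem_inter.mp hk1).1)

/-- Substitutability of the over-and-above choice rule. -/
lemma oaChosen_mono {s : σ} {X Y : Finset α} (hXY : X ⊆ Y) {j : α}
    (hj : j ∈ oaChosen acc score qo q τ s Y) (hjX : j ∈ X) :
    j ∈ oaChosen acc score qo q τ s X := by
  rcases mem_union.mp hj with h | h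
  · exact mem_union.mpr (Or.inl (oaOpen_mono hXY h hjX))
  · rcases mem_biUnion.mp h with ⟨r, _, hr⟩
    by_cases hop : j ∈ oaOpen acc score qo s X
    · exact mem_union.mpr (Or.inl hop)
    · refine mem_union.mpr (Or.inr (mem_biUnion.mpr ⟨r, mem_univ _, ?_⟩))
      rcases mem_oaPool.mp (oaRes_subset hr) with ⟨⟨hj1, _⟩, hj3⟩
      refine topk_mono_sets (oaPool_mono hXY) hr (mem_oaPool.mpr ⟨⟨?_, hop⟩, hj3⟩)
      exact mem_inter.mpr ⟨hjX, (mem_inter.mp hj1).2⟩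

/-- Irrelevance of rejected individuals. -/
lemma oaChosen_irc {s : σ} (hsc : Function.Injective (score s)) {B Z : Finset α}
    (h1 : oaChosen acc score qo q τ s B ⊆ Z) (h2 : Z ⊆ B) :
    oaChosen acc score qo q τ s Z = oaChosen acc score qo q τ s B := by
  have hopen : oaOpen acc score qo s Z = oaOpen acc score qo s B := by
    apply topk_irc hsc
    · intro x hx
      have hxB := oaOpen_subset (A := B) hx
      exact mem_inter.mpr
        ⟨h1 (mem_union.mpr (Or.inl hx)), (mem_inter.mp hxB).2⟩
    · exact inter_subset_inter h2 Subset.rfl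
  have hpool : ∀ r, oaPool acc score qo τ s r Z ⊆ oaPool acc score qo τ s r B := by
    intro r x hx
    rcases mem_oaPool.mp hx with ⟨⟨hx1, hx2⟩, hx3⟩
    rw [hopen] at hx2
    exact mem_oaPool.mpr ⟨⟨inter_subset_inter h2 Subset.rfl hx1, hx2⟩, hx3⟩
  have hres : ∀ r, oaRes acc score qo q τ s r Z = oaRes acc score qo q τ s r B := by
    intro r
    rw [oaRes_eq, oaRes_eq]
    apply topk_irc hsc ?_ (hpool r)
    intro x hx
    have hxP := topk_subset hx
    rcases mem_oaPool.mp hxP with ⟨⟨hx1, hx2⟩, hx3⟩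
    have hxZ : x ∈ Z := h1 (mem_union.mpr (Or.inr (mem_biUnion.mpr ⟨r, mem_univ _, hx⟩)))
    refine mem_oaPool.mpr ⟨⟨mem_inter.mpr ⟨hxZ, (mem_inter.mp hx1).2⟩, ?_⟩, hx3⟩
    rw [hopen]
    exact hx2
  unfold oaChosen
  rw [hopen]
  congr 1
  exact Finset.biUnion_congr rfl (fun r _ => hres r)

lemma oaOpen_disj_res {s : σ} {A : Finset α} :
    Disjoint (oaOpen acc score qo s A) (Finset.univ.biUnion fun r => oaRes acc score qo q τ s r A) := by
  rw [Finset.disjoint_left]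
  intro x hx hc
  rcases mem_biUnion.mp hc with ⟨r, _, hr⟩
  exact (mem_oaPool.mp (oaRes_subset hr)).1.2 hx

lemma oaChosen_card {s : σ} (hsc : Function.Injective (score s)) (A : Finset α) :
    (oaChosen acc score qo q τ s A).card
      = min (qo s) (A ∩ acc s).card + ∑ r, min (q s r) (oaPool acc score qo τ s r A).card := by
  unfold oaChosen
  rw [card_union_of_disjoint oaOpen_disj_res, card_biUnion]
  · congr 1
    · exact topk_card hsc _
    · exact Finset.sum_congr rfl fun r _ => topk_card hsc _
  · intro r1 _ r2 _ hne
    refine Finset.disjoint_left.mpr ?_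
    intro x hx hc
    have h1 := (mem_oaPool.mp (oaRes_subset hx)).2
    have h2 := (mem_oaPool.mp (oaRes_subset hc)).2
    rw [h1] at h2
    exact hne (Option.some_injective _ h2)

/-- The law of aggregate demand for the over-and-above choice rule. -/
lemma oaChosen_card_mono {s : σ} (hsc : Function.Injective (score s)) {X Y : Finset α}
    (hXY : X ⊆ Y) :
    (oaChosen acc score qo q τ s X).card ≤ (oaChosen acc score qo q τ s Y).card := by
  rw [oaChosen_card hsc, oaChosen_card hsc]
  refine Nat.add_le_add ?_ ?_
  · exact min_le_min le_rfl (card_le_card (inter_subset_inter hXY Subset.rfl))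
  · exact Finset.sum_le_sum fun r _ =>
      min_le_min le_rfl (card_le_card (oaPool_mono hXY))

/-! #### properties of `best` -/

lemma best_spec {D : Finset σ} {i : α} {s : σ} (h : best u i D = some s) :
    s ∉ D ∧ u i none < u i (some s) := by
  have hm : s ∈ (Finset.univ.filter fun s => s ∉ D ∧ u i none < u i (some s) : Finset σ) :=
    Finset.mem_toList.mp (List.argmax_mem h)
  exact (mem_filter.mp hm).2

lemma best_le {D : Finset σ} {i : α} {s s' : σ} (h : best u i D = some s)
    (h1 : s' ∉ D) (h2 : u i none < u i (some s')) :
    u i (some s') ≤ u i (some s) := by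
  have h' : s ∈ ((Finset.univ.filter fun s => s ∉ D ∧ u i none < u i (some s) : Finset σ).toList.argmax
      fun s => u i (some s)) := Option.mem_def.mpr h
  have ha : s' ∈ (Finset.univ.filter fun s => s ∉ D ∧ u i none < u i (some s) : Finset σ).toList :=
    Finset.mem_toList.mpr (mem_filter.mpr ⟨mem_univ _, h1, h2⟩)
  exact List.le_of_mem_argmax (f := fun s => u i (some s)) ha h'

lemma best_none {D : Finset σ} {i : α} {s' : σ} (h : best u i D = none)
    (h1 : s' ∉ D) (h2 : u i none < u i (some s')) : False := by
  have he : (Finset.univ.filter fun s => s ∉ D ∧ u i none < u i (some s) : Finset σ) = ∅ :=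
    Finset.toList_eq_nil.mp (List.argmax_eq_none.mp h)
  have : s' ∈ (∅ : Finset σ) := he ▸ mem_filter.mpr ⟨mem_univ _, h1, h2⟩
  simp at this

lemma best_exists_ge {D : Finset σ} {i : α} {s' : σ}
    (h1 : s' ∉ D) (h2 : u i none < u i (some s')) :
    ∃ s, best u i D = some s ∧ u i (some s') ≤ u i (some s) := by
  cases hb : best u i D with
  | none => exact absurd (best_none hb h1 h2) (by simp)
  | some s => exact ⟨s, rfl, best_le hb h1 h2⟩

lemma best_persist (hu : ∀ j, Function.Injective (u j)) {D D' : Finset σ} {i : α} {s : σ}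
    (h : best u i D = some s) (hDD' : D ⊆ D') (hs : s ∉ D') :
    best u i D' = some s := by
  have hacc := (best_spec h).2
  cases hb : best u i D' with
  | none => exact absurd (best_none hb hs hacc) (by simp)
  | some m =>
    have hm := best_spec hb
    have h1 : u i (some m) ≤ u i (some s) :=
      best_le h (fun hc => hm.1 (hDD' hc)) hm.2
    have h2 : u i (some s) ≤ u i (some m) := best_le hb hs hacc
    have : some m = some s := hu i (le_antisymm h1 h2)
    rw [← this]

/-! #### the DA iteration -/

lemma daStep_subset (D : α → Finset σ) (j : α) : D j ⊆ daStep acc score qo q τ u D j :=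
  subset_union_left

lemma mem_apps {D : α → Finset σ} {s : σ} {j : α} :
    j ∈ apps u D s ↔ best u j (D j) = some s := by
  unfold apps
  rw [mem_filter]
  simp

lemma held_persist (hu : ∀ j, Function.Injective (u j)) {D : α → Finset σ} {s : σ} {j : α}
    (hj : j ∈ apps u D s) (hc : j ∈ oaChosen acc score qo q τ s (apps u D s)) :
    j ∈ apps u (daStep acc score qo q τ u D) s := by
  have hb := mem_apps.mp hj
  have hnot : s ∉ daStep acc score qo q τ u D j := by
    intro hmem
    rcases mem_union.mp hmem with h | h
    · exact (best_spec hb).1 h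
    · exact (mem_filter.mp h).2.2 hc
  exact mem_apps.mpr (best_persist hu hb (daStep_subset D j) hnot)

lemma rejections_justified (hsc : ∀ s, Function.Injective (score s))
    (hu : ∀ j, Function.Injective (u j)) :
    ∀ (n : ℕ) (j : α) (s : σ),
      s ∈ (daStep acc score qo q τ u)^[n] (fun _ => ∅) j →
      j ∉ oaChosen acc score qo q τ s
        ((apps u ((daStep acc score qo q τ u)^[n] (fun _ => ∅)) s) ∪ {j}) := by
  intro n
  induction n with
  | zero => intro j s hs; simp at hs
  | succ n ih =>
    intro j s hs
    rw [Function.iterate_succ_apply'] at hs ⊢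
    set D := (daStep acc score qo q τ u)^[n] (fun _ => ∅) with hD
    set A := apps u D s with hA
    set A' := apps u (daStep acc score qo q τ u D) s with hA'
    have halpha : j ∉ oaChosen acc score qo q τ s (A ∪ {j}) := by
      rcases mem_union.mp hs with h | h
      · exact ih j s h
      · rcases mem_filter.mp h with ⟨-, h1, h2⟩
        have hjA : j ∈ A := mem_apps.mpr h1
        have he : A ∪ {j} = A := union_eq_left.mpr (singleton_subset_iff.mpr hjA)
        rw [he]
        exact h2
    have hbeta : oaChosen acc score qo q τ s (A ∪ {j}) ⊆ A' := by
      intro x hx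
      have hxA : x ∈ A := by
        rcases mem_union.mp ((mem_inter.mp (oaChosen_subset hx)).1) with h | h
        · exact h
        · rcases mem_singleton.mp h with rfl
          exact absurd hx halpha
      exact held_persist hu hxA (oaChosen_mono subset_union_left hx hxA)
    have hjA' : j ∉ A' := by
      intro hj'
      exact (best_spec (mem_apps.mp hj')).1 hs
    have hjY : j ∉ oaChosen acc score qo q τ s ((A ∪ {j}) ∪ A') := fun hc =>
      halpha (oaChosen_mono subset_union_left hc
        (mem_union.mpr (Or.inr (mem_singleton_self j))))
    have hCY : oaChosen acc score qo q τ s ((A ∪ {j}) ∪ A') ⊆ A' ∪ {j} := by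
      intro x hx
      by_cases hxj : x = j
      · subst hxj
        exact mem_union.mpr (Or.inr (mem_singleton_self x))
      · have hxY := (mem_inter.mp (oaChosen_subset hx)).1
        rcases mem_union.mp hxY with h | h
        · exact mem_union.mpr (Or.inl (hbeta (oaChosen_mono subset_union_left hx h)))
        · exact mem_union.mpr (Or.inl h)
    have hsub : A' ∪ {j} ⊆ (A ∪ {j}) ∪ A' := by
      intro x hx
      rcases mem_union.mp hx with h | h
      · exact mem_union.mpr (Or.inr h)
      · exact mem_union.mpr (Or.inl (mem_union.mpr (Or.inr h)))
    have hirc := oaChosen_irc (hsc s) hCY hsub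
    intro hc
    rw [hirc] at hc
    exact hjY hc

lemma daState_fix :
    daStep acc score qo q τ u (daState acc score qo q τ u) = daState acc score qo q τ u := by
  have hmono : ∀ D, daStep acc score qo q τ u D = D ∨
      (∑ j, (D j).card) + 1 ≤ ∑ j, ((daStep acc score qo q τ u D) j).card := by
    intro D
    by_cases h : daStep acc score qo q τ u D = D
    · exact Or.inl h
    · right
      have hne : ∃ j, daStep acc score qo q τ u D j ≠ D j := by
        by_contra hc
        push_neg at hc
        exact h (funext hc)
      rcases hne with ⟨j0, hj0⟩
      have hlt : ∑ j, (D j).card < ∑ j, ((daStep acc score qo q τ u D) j).card := by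
        apply Finset.sum_lt_sum (fun j _ => card_le_card (daStep_subset D j))
        exact ⟨j0, mem_univ _,
          card_lt_card ((daStep_subset D j0).ssubset_of_ne (Ne.symm hj0))⟩
      omega
  have hbound : ∀ D : α → Finset σ, (∑ j, (D j).card) ≤ Fintype.card α * Fintype.card σ := by
    intro D
    calc (∑ j, (D j).card) ≤ ∑ _j : α, Fintype.card σ :=
          Finset.sum_le_sum fun j _ => Finset.card_le_univ (D j)
      _ = Fintype.card α * Fintype.card σ := by
          rw [Finset.sum_const, Finset.card_univ, smul_eq_mul]
  have key : ∃ k, k ≤ Fintype.card α * Fintype.card σ ∧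
      daStep acc score qo q τ u ((daStep acc score qo q τ u)^[k] (fun _ => ∅)) =
        (daStep acc score qo q τ u)^[k] (fun _ => ∅) := by
    by_contra hcon
    push_neg at hcon
    have grow : ∀ k, k ≤ Fintype.card α * Fintype.card σ + 1 →
        k ≤ ∑ j, (((daStep acc score qo q τ u)^[k] (fun _ => ∅)) j).card := by
      intro k
      induction k with
      | zero => intro _; exact Nat.zero_le _
      | succ k ih =>
        intro hk
        have h1 := ih (by omega)
        rcases hmono ((daStep acc score qo q τ u)^[k] (fun _ => ∅)) with h | h
        · exact absurd h (hcon k (by omega))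
        · rw [Function.iterate_succ_apply']
          omega
    have h2 := grow (Fintype.card α * Fintype.card σ + 1) le_rfl
    have h3 := hbound ((daStep acc score qo q τ u)^[Fintype.card α * Fintype.card σ + 1] (fun _ => ∅))
    omega
  rcases key with ⟨k, hk, hfix⟩
  have hstab : ∀ n, k ≤ n →
      (daStep acc score qo q τ u)^[n] (fun _ => ∅) =
        (daStep acc score qo q τ u)^[k] (fun _ => ∅) := by
    intro n hn
    induction n, hn using Nat.le_induction with
    | base => rfl
    | succ n hn ih => rw [Function.iterate_succ_apply', ih, hfix]
  show daStep acc score qo q τ u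
      ((daStep acc score qo q τ u)^[Fintype.card α * Fintype.card σ + 1] (fun _ => ∅)) = _
  rw [hstab (Fintype.card α * Fintype.card σ + 1) (by omega), hfix]
  exact (hstab (Fintype.card α * Fintype.card σ + 1) (by omega)).symm

lemma apps_chosen_fix {s : σ} {j : α} (hj : j ∈ apps u (daState acc score qo q τ u) s) :
    j ∈ oaChosen acc score qo q τ s (apps u (daState acc score qo q τ u) s) := by
  by_contra hc
  have hb := mem_apps.mp hj
  have hmem : s ∈ daStep acc score qo q τ u (daState acc score qo q τ u) j :=
    mem_union.mpr (Or.inr (mem_filter.mpr ⟨mem_univ _, hb, hc⟩))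
  rw [daState_fix] at hmem
  exact (best_spec hb).1 hmem

lemma rejections_justified_fix (hsc : ∀ s, Function.Injective (score s))
    (hu : ∀ j, Function.Injective (u j)) {j : α} {s : σ}
    (hs : s ∈ daState acc score qo q τ u j) :
    j ∉ oaChosen acc score qo q τ s ((apps u (daState acc score qo q τ u) s) ∪ {j}) :=
  rejections_justified hsc hu (Fintype.card α * Fintype.card σ + 1) j s hs

/-! #### stable matchings -/

/-- The matching produced by the DA-OA algorithm. -/
noncomputable def dmu (acc : σ → Finset α) (score : σ → α → ℕ) (qo : σ → ℕ)
    (q : σ → ρ → ℕ) (τ : α → Option ρ) (u : α → Option σ → ℕ) : α → Option σ :=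
  fun j => best u j (daState acc score qo q τ u j)

/-- The set of individuals matched to `s` by a matching. -/
def matchedAt (m : α → Option σ) (s : σ) : Finset α :=
  Finset.univ.filter fun j => m j = some s

/-- Stability of a matching with respect to a profile. -/
def IsStableM (acc : σ → Finset α) (score : σ → α → ℕ) (qo : σ → ℕ) (q : σ → ρ → ℕ)
    (τ : α → Option ρ) (u : α → Option σ → ℕ) (m : α → Option σ) : Prop :=
  (∀ j s, m j = some s → u j none < u j (some s)) ∧
  (∀ s, oaChosen acc score qo q τ s (matchedAt m s) = matchedAt m s) ∧
  (∀ j s, u j (m j) < u j (some s) →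
    j ∉ oaChosen acc score qo q τ s (matchedAt m s ∪ {j}))

lemma matchedAt_dmu (s : σ) :
    matchedAt (dmu acc score qo q τ u) s = apps u (daState acc score qo q τ u) s := rfl

lemma mem_matchedAt {m : α → Option σ} {s : σ} {j : α} :
    j ∈ matchedAt m s ↔ m j = some s := by
  unfold matchedAt
  rw [mem_filter]
  simp

lemma dmu_ir {j : α} : u j none ≤ u j (dmu acc score qo q τ u j) := by
  cases hb : dmu acc score qo q τ u j with
  | none => exact le_rfl
  | some s => exact le_of_lt (best_spec hb).2

lemma dmu_stable (hsc : ∀ s, Function.Injective (score s))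
    (hu : ∀ j, Function.Injective (u j)) :
    IsStableM acc score qo q τ u (dmu acc score qo q τ u) := by
  refine ⟨fun j s h => (best_spec h).2, ?_, ?_⟩
  · intro s
    rw [matchedAt_dmu]
    apply Finset.Subset.antisymm
    · exact (oaChosen_subset.trans inter_subset_left)
    · intro j hj
      exact apps_chosen_fix hj
  · intro j s h
    have hacc : u j none < u j (some s) := lt_of_le_of_lt dmu_ir h
    rw [matchedAt_dmu]
    by_cases hsD : s ∈ daState acc score qo q τ u j
    · exact rejections_justified_fix hsc hu hsD
    · exfalso
      rcases best_exists_ge (u := u) hsD hacc with ⟨s', hb, hle⟩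
      have : dmu acc score qo q τ u j = some s' := hb
      rw [this] at h
      exact absurd (lt_of_le_of_lt hle h) (lt_irrefl _)

/-- The matching induced by `daAssign` is the DA matching. -/
lemma mu_daAssign (j : α) :
    mu (daAssign acc score qo q τ u) j = dmu acc score qo q τ u j := by
  unfold mu daAssign dmu
  cases hb : best u j (daState acc score qo q τ u j) with
  | none => simp
  | some s =>
    have hj : j ∈ apps u (daState acc score qo q τ u) s := mem_apps.mpr hb
    have hc := apps_chosen_fix hj
    simp only
    by_cases hop : j ∈ oaOpen acc score qo s (apps u (daState acc score qo q τ u) s)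
    · rw [if_pos hop]
      rfl
    · rw [if_neg hop]
      rcases mem_union.mp hc with h | h
      · exact absurd h hop
      · rcases mem_biUnion.mp h with ⟨r, _, hr⟩
        have hτ : τ j = some r := (mem_oaPool.mp (oaRes_subset hr)).2
        rw [hτ]
        simp only
        rw [if_pos hr]
        rfl

/-- DA-optimality: every individual weakly prefers the DA matching to any
stable matching. -/
lemma da_optimal (hsc : ∀ s, Function.Injective (score s))
    (hu : ∀ j, Function.Injective (u j)) {m : α → Option σ}
    (hst : IsStableM acc score qo q τ u m) :
    ∀ j, u j (m j) ≤ u j (dmu acc score qo q τ u j) := by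
  have main : ∀ (n : ℕ) (j : α) (s : σ), m j = some s →
      s ∉ (daStep acc score qo q τ u)^[n] (fun _ => ∅) j := by
    intro n
    induction n with
    | zero => intro j s _ h; simp at h
    | succ n ih =>
      intro j s hm hmem
      rw [Function.iterate_succ_apply'] at hmem
      set D := (daStep acc score qo q τ u)^[n] (fun _ => ∅) with hD
      rcases mem_union.mp hmem with h | h
      · exact ih j s hm h
      · rcases mem_filter.mp h with ⟨-, h1, h2⟩
        set A := apps u D s with hA
        set M := matchedAt m s with hM
        have hjA : j ∈ A := mem_apps.mpr h1
        have hjM : j ∈ M := mem_matchedAt.mpr hm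
        have hjY : j ∉ oaChosen acc score qo q τ s (A ∪ M) := fun hc =>
          h2 (oaChosen_mono subset_union_left hc hjA)
        by_cases hcase : oaChosen acc score qo q τ s (A ∪ M) ⊆ M
        · have hirc := oaChosen_irc (hsc s) hcase subset_union_right
          have hjCM : j ∈ oaChosen acc score qo q τ s M := (hst.2.1 s).symm ▸ hjM
          rw [hirc] at hjCM
          exact hjY hjCM
        · rcases Finset.not_subset.mp hcase with ⟨x, hxC, hxM⟩
          have hxY := (mem_inter.mp (oaChosen_subset hxC)).1
          have hxA : x ∈ A := by
            rcases mem_union.mp hxY with h' | h'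
            · exact h'
            · exact absurd h' hxM
          have hbx := mem_apps.mp hxA
          have hval : u x (m x) < u x (some s) := by
            cases hmx : m x with
            | none => exact (best_spec hbx).2
            | some s' =>
              have hs' : s' ∉ D x := ih x s' hmx
              have hacc : u x none < u x (some s') := hst.1 x s' hmx
              have hle : u x (some s') ≤ u x (some s) := best_le hbx hs' hacc
              rcases lt_or_eq_of_le hle with h' | h'
              · exact h'
              · exact absurd (mem_matchedAt.mpr
                  ((Option.some_injective σ (hu x h')) ▸ hmx)) hxM
          have hblock := hst.2.2 x s hval
          apply hblock
          refine oaChosen_mono ?_ hxC (mem_union.mpr (Or.inr (mem_singleton_self x)))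
          intro y hy
          rcases mem_union.mp hy with h' | h'
          · exact mem_union.mpr (Or.inr h')
          · rcases mem_singleton.mp h' with rfl
            exact mem_union.mpr (Or.inl hxA)
  intro j
  cases hm : m j with
  | none => exact le_trans (le_of_eq rfl) dmu_ir
  | some s =>
    have hs : s ∉ daState acc score qo q τ u j :=
      main (Fintype.card α * Fintype.card σ + 1) j s hm
    have hacc : u j none < u j (some s) := hst.1 j s hm
    rcases best_exists_ge (u := u) hs hacc with ⟨s', hb, hle⟩
    have hd : dmu acc score qo q τ u j = some s' := hb
    rw [hd]
    exact hle

/-- The rural-hospitals property: any individual matched by DA is matched in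
every stable matching. -/
lemma da_rural (hsc : ∀ s, Function.Injective (score s))
    (hu : ∀ j, Function.Injective (u j)) {m : α → Option σ}
    (hst : IsStableM acc score qo q τ u m) {j : α}
    (hj : dmu acc score qo q τ u j ≠ none) : m j ≠ none := by
  have hcard : ∀ s, (matchedAt (dmu acc score qo q τ u) s).card ≤ (matchedAt m s).card := by
    intro s
    set A := matchedAt (dmu acc score qo q τ u) s with hA
    set M := matchedAt m s with hM
    have hCY : oaChosen acc score qo q τ s (A ∪ M) ⊆ M := by
      intro x hx
      by_contra hxM
      have hxA : x ∈ A := by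
        rcases mem_union.mp (mem_inter.mp (oaChosen_subset hx)).1 with h' | h'
        · exact h'
        · exact absurd h' hxM
      have hdx : dmu acc score qo q τ u x = some s := mem_matchedAt.mp hxA
      have hle : u x (m x) ≤ u x (dmu acc score qo q τ u x) := da_optimal hsc hu hst x
      rw [hdx] at hle
      have hval : u x (m x) < u x (some s) := by
        rcases lt_or_eq_of_le hle with h' | h'
        · exact h'
        · exact absurd (mem_matchedAt.mpr (hu x h')) hxM
      refine hst.2.2 x s hval (oaChosen_mono ?_ hx (mem_union.mpr (Or.inr (mem_singleton_self x))))
      intro y hy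
      rcases mem_union.mp hy with h' | h'
      · exact mem_union.mpr (Or.inr h')
      · rcases mem_singleton.mp h' with rfl
        exact mem_union.mpr (Or.inl hxA)
    have hirc := oaChosen_irc (hsc s) hCY subset_union_right
    have hMC : M = oaChosen acc score qo q τ s (A ∪ M) := by
      rw [← hirc]
      exact (hst.2.1 s).symm
    have hCA : oaChosen acc score qo q τ s A = A := (dmu_stable hsc hu).2.1 s
    have hlad : (oaChosen acc score qo q τ s A).card ≤ (oaChosen acc score qo q τ s (A ∪ M)).card :=
      oaChosen_card_mono (hsc s) subset_union_left
    rw [hCA] at hlad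
    rw [hMC]
    exact hlad
  have hpart : ∀ m' : α → Option σ,
      (Finset.univ.filter fun j => m' j ≠ none).card = ∑ s, (matchedAt m' s).card := by
    intro m'
    rw [← Finset.card_biUnion]
    · congr 1
      ext x
      simp [mem_matchedAt, Option.ne_none_iff_exists']
    · intro s1 _ s2 _ hne
      refine Finset.disjoint_left.mpr ?_
      intro x h1 h2
      rw [mem_matchedAt] at h1 h2
      rw [h1] at h2
      exact hne (Option.some_injective σ h2)
  have hsub : (Finset.univ.filter fun x => m x ≠ none) ⊆
      (Finset.univ.filter fun x => dmu acc score qo q τ u x ≠ none) := by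
    intro x hx
    rcases Option.ne_none_iff_exists'.mp (mem_filter.mp hx).2 with ⟨s, hs⟩
    have h1 : u x none < u x (some s) := hst.1 x s hs
    have h2 : u x (m x) ≤ u x (dmu acc score qo q τ u x) := da_optimal hsc hu hst x
    refine mem_filter.mpr ⟨mem_univ _, fun hc => ?_⟩
    rw [hc, hs] at h2
    exact absurd (lt_of_lt_of_le h1 h2) (lt_irrefl _)
  have heq : (Finset.univ.filter fun x => m x ≠ none) =
      (Finset.univ.filter fun x => dmu acc score qo q τ u x ≠ none) := by
    apply Finset.eq_of_subset_of_card_le hsub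
    rw [hpart m, hpart (dmu acc score qo q τ u)]
    exact Finset.sum_le_sum fun s _ => hcard s
  intro hc
  have hjmem : j ∈ Finset.univ.filter fun x => dmu acc score qo q τ u x ≠ none :=
    mem_filter.mpr ⟨mem_univ _, hj⟩
  rw [← heq] at hjmem
  exact (mem_filter.mp hjmem).2 hc

/-! #### transfer of stability across profiles -/

/-- Changing the preferences of one individual preserves stability, provided
the conditions at that individual still hold. -/
lemma stable_pref_change {m : α → Option σ} {i : α} {u' : α → Option σ → ℕ}
    (hst : IsStableM acc score qo q τ u m)
    (hagree : ∀ j, j ≠ i → u' j = u j)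
    (hIR : ∀ s, m i = some s → u' i none < u' i (some s))
    (hblock : ∀ s, u' i (m i) < u' i (some s) →
      i ∉ oaChosen acc score qo q τ s (matchedAt m s ∪ {i})) :
    IsStableM acc score qo q τ u' m := by
  refine ⟨?_, hst.2.1, ?_⟩
  · intro j s h
    by_cases hj : j = i
    · subst hj; exact hIR s h
    · rw [hagree j hj]; exact hst.1 j s h
  · intro j s h
    by_cases hj : j = i
    · subst hj; exact hblock s h
    · rw [hagree j hj] at h; exact hst.2.2 j s h

lemma tau_pool_subset {τ1 τ2 : α → Option ρ} {i : α} (h1 : τ1 i = none)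
    (hagree : ∀ j, j ≠ i → τ1 j = τ2 j) {s : σ} {r : ρ} {X : Finset α} :
    oaPool acc score qo τ1 s r X ⊆ oaPool acc score qo τ2 s r X := by
  intro k hk
  rcases mem_oaPool.mp hk with ⟨⟨hk1, hk2⟩, hk3⟩
  have hki : k ≠ i := by rintro rfl; rw [h1] at hk3; exact absurd hk3 (by simp)
  exact mem_oaPool.mpr ⟨⟨hk1, hk2⟩, (hagree k hki) ▸ hk3⟩

/-- If `j ≠ i` is rejected when `i` claims general category, `j` is also
rejected when `i` reports a reserve category. -/
lemma tau_reject_transfer {τ1 τ2 : α → Option ρ} {i : α} (h1 : τ1 i = none)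
    (hagree : ∀ j, j ≠ i → τ1 j = τ2 j) {s : σ} {X : Finset α} {j : α} (hji : j ≠ i)
    (hrej : j ∉ oaChosen acc score qo q τ1 s X) :
    j ∉ oaChosen acc score qo q τ2 s X := by
  intro hc
  apply hrej
  rcases mem_union.mp hc with h | h
  · exact mem_union.mpr (Or.inl h)
  · rcases mem_biUnion.mp h with ⟨r, _, hr⟩
    refine mem_union.mpr (Or.inr (mem_biUnion.mpr ⟨r, mem_univ _, ?_⟩))
    rw [oaRes_eq] at hr ⊢
    rcases mem_oaPool.mp (topk_subset hr) with ⟨⟨hj1, hj2⟩, hj3⟩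
    exact topk_mono_sets (tau_pool_subset h1 hagree) hr
      (mem_oaPool.mpr ⟨⟨hj1, hj2⟩, (hagree j hji) ▸ hj3⟩)

/-- If `i` is not in `X`, or is chosen in the open category, the chosen set
does not depend on `i`'s reported category. -/
lemma tau_chosen_eq {τ1 τ2 : α → Option ρ} {i : α}
    (hagree : ∀ j, j ≠ i → τ1 j = τ2 j) {s : σ} {X : Finset α}
    (hi : i ∉ X ∨ i ∈ oaOpen acc score qo s X) :
    oaChosen acc score qo q τ1 s X = oaChosen acc score qo q τ2 s X := by
  have hpool : ∀ r, oaPool acc score qo τ1 s r X = oaPool acc score qo τ2 s r X := by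
    intro r
    ext k
    have hki : k ∈ (X ∩ acc s) \ oaOpen acc score qo s X → k ≠ i := by
      intro hk
      rintro rfl
      rcases mem_sdiff.mp hk with ⟨hk1, hk2⟩
      rcases hi with h | h
      · exact h (mem_inter.mp hk1).1
      · exact hk2 h
    rw [mem_oaPool, mem_oaPool, ← mem_sdiff]
    constructor
    · rintro ⟨ha, hb⟩
      exact ⟨ha, (hagree k (hki ha)) ▸ hb⟩
    · rintro ⟨ha, hb⟩
      exact ⟨ha, (hagree k (hki ha)).symm ▸ hb⟩
  unfold oaChosen
  congr 1
  apply Finset.biUnion_congr rfl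
  intro r _
  rw [oaRes_eq, oaRes_eq, hpool r]

/-- Stability is preserved when individual `i` re-reports their true category
in place of the general category, provided `i` cannot block. -/
lemma stable_tau_change {m : α → Option σ} {i : α} {τ1 τ2 : α → Option ρ}
    (h1 : τ1 i = none) (hagree : ∀ j, j ≠ i → τ1 j = τ2 j)
    (hst : IsStableM acc score qo q τ1 u m)
    (hblock : ∀ s, u i (m i) < u i (some s) →
      i ∉ oaChosen acc score qo q τ2 s (matchedAt m s ∪ {i})) :
    IsStableM acc score qo q τ2 u m := by
  refine ⟨hst.1, ?_, ?_⟩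
  · intro s
    have hch := hst.2.1 s
    by_cases hiM : i ∈ matchedAt m s
    · have hiC : i ∈ oaChosen acc score qo q τ1 s (matchedAt m s) := hch.symm ▸ hiM
      have hiOpen : i ∈ oaOpen acc score qo s (matchedAt m s) := by
        rcases mem_union.mp hiC with h | h
        · exact h
        · rcases mem_biUnion.mp h with ⟨r, _, hr⟩
          have := (mem_oaPool.mp (oaRes_subset hr)).2
          rw [h1] at this
          exact absurd this (by simp)
      rw [← tau_chosen_eq (q := q) hagree (Or.inr hiOpen)]
      exact hch
    · rw [← tau_chosen_eq (q := q) hagree (Or.inl hiM)]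
      exact hch
  · intro j s h
    by_cases hj : j = i
    · subst hj; exact hblock s h
    · exact tau_reject_transfer h1 hagree hj (hst.2.2 j s h)

/-! #### two auxiliary preference relations -/

variable (σ) in
/-- A preference whose only acceptable institution is `sstar`. -/
noncomputable def singletonPref (sstar : σ) : Option σ → ℕ := fun o =>
  if o = some sstar then Fintype.card (Option σ) + 1
  else if o = none then Fintype.card (Option σ)
  else (Fintype.equivFin (Option σ) o : ℕ)

lemma singletonPref_some (sstar : σ) :
    singletonPref σ sstar (some sstar) = Fintype.card (Option σ) + 1 := by
  simp [singletonPref]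

lemma singletonPref_none (sstar : σ) :
    singletonPref σ sstar none = Fintype.card (Option σ) := by
  simp [singletonPref]

lemma singletonPref_le (sstar : σ) (o : Option σ) :
    singletonPref σ sstar o ≤ Fintype.card (Option σ) + 1 := by
  unfold singletonPref
  split
  · exact le_rfl
  · split
    · omega
    · exact le_of_lt (lt_trans (Fintype.equivFin (Option σ) o).isLt (by omega))

lemma singletonPref_top (sstar : σ) (o : Option σ)
    (h : Fintype.card (Option σ) + 1 ≤ singletonPref σ sstar o) : o = some sstar := by
  by_contra hne
  unfold singletonPref at h
  rw [if_neg hne] at h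
  by_cases h2 : o = none
  · rw [if_pos h2] at h; omega
  · rw [if_neg h2] at h
    have := (Fintype.equivFin (Option σ) o).isLt
    omega

lemma singletonPref_inj (sstar : σ) : Function.Injective (singletonPref σ sstar) := by
  intro a b hab
  by_cases ha : a = some sstar
  · rw [ha]
    exact (singletonPref_top sstar b (by rw [← hab, ha, singletonPref_some])).symm ▸ rfl
  · by_cases hb : b = some sstar
    · exact absurd (singletonPref_top sstar a (by rw [hab, hb, singletonPref_some])) ha
    · unfold singletonPref at hab
      rw [if_neg ha, if_neg hb] at hab
      by_cases ha2 : a = none <;> by_cases hb2 : b = none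
      · rw [ha2, hb2]
      · rw [if_pos ha2, if_neg hb2] at hab
        exact absurd hab.symm (Nat.ne_of_lt (Fintype.equivFin (Option σ) b).isLt)
      · rw [if_neg ha2, if_pos hb2] at hab
        exact absurd hab (Nat.ne_of_lt (Fintype.equivFin (Option σ) a).isLt)
      · rw [if_neg ha2, if_neg hb2] at hab
        exact (Fintype.equivFin (Option σ)).injective (Fin.val_injective hab)

/-- The truncation of a preference `v` at `sstar`. -/
noncomputable def truncPref (v : Option σ → ℕ) (sstar : σ) : Option σ → ℕ := fun o =>
  if v (some sstar) ≤ v o then Fintype.card (Option σ) + 1 + v o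
  else if o = none then Fintype.card (Option σ)
  else (Fintype.equivFin (Option σ) o : ℕ)

lemma truncPref_high {v : Option σ → ℕ} {sstar : σ} {o : Option σ}
    (h : v (some sstar) ≤ v o) :
    truncPref v sstar o = Fintype.card (Option σ) + 1 + v o := by
  simp [truncPref, h]

lemma truncPref_none {v : Option σ → ℕ} {sstar : σ} (hacc : v none < v (some sstar)) :
    truncPref v sstar none = Fintype.card (Option σ) := by
  simp [truncPref, not_le.mpr hacc]

lemma truncPref_of_gt {v : Option σ → ℕ} {sstar : σ} {o : Option σ}
    (h : Fintype.card (Option σ) < truncPref v sstar o) : v (some sstar) ≤ v o := by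
  by_contra hc
  unfold truncPref at h
  rw [if_neg hc] at h
  by_cases h2 : o = none
  · rw [if_pos h2] at h; omega
  · rw [if_neg h2] at h
    have := (Fintype.equivFin (Option σ) o).isLt
    omega

lemma truncPref_inj {v : Option σ → ℕ} (hv : Function.Injective v) (sstar : σ) :
    Function.Injective (truncPref v sstar) := by
  intro a b hab
  unfold truncPref at hab
  by_cases ha : v (some sstar) ≤ v a <;> by_cases hb : v (some sstar) ≤ v b
  · rw [if_pos ha, if_pos hb] at hab
    exact hv (by omega)
  · exfalso
    rw [if_pos ha, if_neg hb] at hab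
    by_cases hb2 : b = none
    · rw [if_pos hb2] at hab; omega
    · rw [if_neg hb2] at hab
      have := (Fintype.equivFin (Option σ) b).isLt
      omega
  · exfalso
    rw [if_neg ha, if_pos hb] at hab
    by_cases ha2 : a = none
    · rw [if_pos ha2] at hab; omega
    · rw [if_neg ha2] at hab
      have := (Fintype.equivFin (Option σ) a).isLt
      omega
  · rw [if_neg ha, if_neg hb] at hab
    by_cases ha2 : a = none <;> by_cases hb2 : b = none
    · rw [ha2, hb2]
    · rw [if_pos ha2, if_neg hb2] at hab
      exact absurd hab.symm (Nat.ne_of_lt (Fintype.equivFin (Option σ) b).isLt)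
    · rw [if_neg ha2, if_pos hb2] at hab
      exact absurd hab (Nat.ne_of_lt (Fintype.equivFin (Option σ) a).isLt)
    · rw [if_neg ha2, if_neg hb2] at hab
      exact (Fintype.equivFin (Option σ)).injective (Fin.val_injective hab)

/-- The core of the incentive-compatibility argument, stated for `dmu`. -/
lemma key_ic (acc : σ → Finset α) (score : σ → α → ℕ)
    (hsc : ∀ s, Function.Injective (score s)) (qo : σ → ℕ) (q : σ → ρ → ℕ)
    (t : α → Option ρ) (ui : α → Option σ → ℕ) (hui : ∀ j, Function.Injective (ui j))
    (i : α) (ui' : Option σ → ℕ) (hui' : Function.Injective ui')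
    (τ' : Option ρ) (hτ' : τ' = t i ∨ τ' = none) :
    ui i (dmu acc score qo q (Function.update t i τ') (Function.update ui i ui') i) ≤
      ui i (dmu acc score qo q t ui i) := by
  by_contra hcon
  push_neg at hcon
  have hui2 : ∀ j, Function.Injective (Function.update ui i ui' j) := by
    intro j
    rcases eq_or_ne j i with rfl | hj
    · rw [Function.update_self]; exact hui'
    · rw [Function.update_of_ne hj]; exact hui j
  have hIRμ : ui i none ≤ ui i (dmu acc score qo q t ui i) := dmu_ir
  obtain ⟨sstar, hν⟩ : ∃ s, dmu acc score qo q (Function.update t i τ')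
      (Function.update ui i ui') i = some s := by
    cases hb : dmu acc score qo q (Function.update t i τ') (Function.update ui i ui') i with
    | none =>
      rw [hb] at hcon
      exact absurd (lt_of_le_of_lt hIRμ hcon) (lt_irrefl _)
    | some s => exact ⟨s, rfl⟩
  rw [hν] at hcon
  have haccs : ui i none < ui i (some sstar) := lt_of_le_of_lt hIRμ hcon
  -- Step 1: `i`'s singleton report of `sstar` (with category report `τ'`)
  -- still gets `i` into `sstar`.
  have hu1 : ∀ j, Function.Injective (Function.update ui i (singletonPref σ sstar) j) := by
    intro j
    rcases eq_or_ne j i with rfl | hj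
    · rw [Function.update_self]; exact singletonPref_inj sstar
    · rw [Function.update_of_ne hj]; exact hui j
  have hstB : IsStableM acc score qo q (Function.update t i τ')
      (Function.update ui i (singletonPref σ sstar))
      (dmu acc score qo q (Function.update t i τ') (Function.update ui i ui')) := by
    apply stable_pref_change (i := i) (dmu_stable hsc hui2)
    · intro j hj
      rw [Function.update_of_ne hj, Function.update_of_ne hj]
    · intro s h
      rw [hν] at h
      injection h with h
      subst h
      rw [Function.update_self, singletonPref_none, singletonPref_some]
      omega
    · intro s h
      exfalso
      rw [hν, Function.update_self, singletonPref_some] at h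
      exact absurd (lt_of_lt_of_le h (singletonPref_le sstar _)) (lt_irrefl _)
  have hopt1 := da_optimal hsc hu1 hstB i
  rw [hν, Function.update_self, singletonPref_some] at hopt1
  have hξ1 : dmu acc score qo q (Function.update t i τ')
      (Function.update ui i (singletonPref σ sstar)) i = some sstar :=
    singletonPref_top sstar _ hopt1
  -- Step 2: with the singleton report, `i` may as well report the true
  -- category and still gets `sstar`.
  have hξ2 : dmu acc score qo q t (Function.update ui i (singletonPref σ sstar)) i
      = some sstar := by
    rcases hτ' with h | h
    · rw [h, Function.update_eq_self] at hξ1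
      exact hξ1
    · have hstD : IsStableM acc score qo q t (Function.update ui i (singletonPref σ sstar))
          (dmu acc score qo q (Function.update t i τ')
            (Function.update ui i (singletonPref σ sstar))) := by
        apply stable_tau_change (i := i) (τ1 := Function.update t i τ')
        · rw [Function.update_self]; exact h
        · intro j hj
          rw [Function.update_of_ne hj]
        · exact dmu_stable hsc hu1
        · intro s hs
          exfalso
          rw [hξ1, Function.update_self, singletonPref_some] at hs
          exact absurd (lt_of_lt_of_le hs (singletonPref_le sstar _)) (lt_irrefl _)
      have hopt2 := da_optimal hsc hu1 hstD i
      rw [hξ1, Function.update_self, singletonPref_some] at hopt2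
      exact singletonPref_top sstar _ hopt2
  -- Step 3: consider the truncation of `i`'s true preference at `sstar`.
  have hu3 : ∀ j, Function.Injective (Function.update ui i (truncPref (ui i) sstar) j) := by
    intro j
    rcases eq_or_ne j i with rfl | hj
    · rw [Function.update_self]; exact truncPref_inj (hui j) sstar
    · rw [Function.update_of_ne hj]; exact hui j
  cases hy : dmu acc score qo q t (Function.update ui i (truncPref (ui i) sstar)) i with
  | some y =>
    have hacc3 := (dmu_stable hsc hu3).1 i y hy
    rw [Function.update_self, truncPref_none haccs] at hacc3
    have hhi : ui i (some sstar) ≤ ui i (some y) := truncPref_of_gt hacc3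
    have hstE : IsStableM acc score qo q t ui
        (dmu acc score qo q t (Function.update ui i (truncPref (ui i) sstar))) := by
      apply stable_pref_change (i := i) (dmu_stable hsc hu3)
      · intro j hj
        rw [Function.update_of_ne hj]
      · intro s hs
        rw [hy] at hs
        injection hs with hs
        subst hs
        exact lt_of_lt_of_le haccs hhi
      · intro s hs
        rw [hy] at hs
        have h3 : Function.update ui i (truncPref (ui i) sstar) i
            (dmu acc score qo q t (Function.update ui i (truncPref (ui i) sstar)) i)
            < Function.update ui i (truncPref (ui i) sstar) i (some s) := by
          rw [hy, Function.update_self, truncPref_high hhi,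
            truncPref_high (le_trans hhi (le_of_lt hs))]
          omega
        exact (dmu_stable hsc hu3).2.2 i s h3
    have hoptE := da_optimal hsc hui hstE i
    rw [hy] at hoptE
    have hlast := lt_of_le_of_lt hoptE hcon
    omega
  | none =>
    have hstF : IsStableM acc score qo q t (Function.update ui i (singletonPref σ sstar))
        (dmu acc score qo q t (Function.update ui i (truncPref (ui i) sstar))) := by
      apply stable_pref_change (i := i) (dmu_stable hsc hu3)
      · intro j hj
        rw [Function.update_of_ne hj, Function.update_of_ne hj]
      · intro s hs
        rw [hy] at hs
        exact absurd hs (by simp)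
      · intro s hs
        rw [hy, Function.update_self, singletonPref_none] at hs
        have hss : s = sstar := by
          by_contra hne
          have hle : singletonPref σ sstar (some s) ≤ Fintype.card (Option σ) := by
            unfold singletonPref
            rw [if_neg (by simpa using hne), if_neg (by simp)]
            exact le_of_lt (Fintype.equivFin (Option σ) (some s)).isLt
          omega
        rw [hss]
        have h3 : Function.update ui i (truncPref (ui i) sstar) i
            (dmu acc score qo q t (Function.update ui i (truncPref (ui i) sstar)) i)
            < Function.update ui i (truncPref (ui i) sstar) i (some sstar) := by
          rw [hy, Function.update_self, truncPref_none haccs, truncPref_high le_rfl]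
          omega
        exact (dmu_stable hsc hu3).2.2 i sstar h3
    have hrural := da_rural hsc hu1 hstF (j := i) (by rw [hξ2]; simp)
    exact hrural hy

end Aux

/-- The DA-OA mechanism is incentive-compatible: for every
profile of true (strict) preferences `ui` and true category memberships `t`,
every individual `i`, and every misreport consisting of a strict preference
`ui'` and a membership `τ'` in `{t i, GC}`, the institution `i` receives under
DA-OA when everyone reports truthfully is weakly preferred by `i` (under the
true preference `ui i`) to the institution `i` receives when `i` reports
`(ui', τ')` and the others report truthfully. -/
theorem daOA_incentive_compatible
    (acc : σ → Finset α) (score : σ → α → ℕ)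
    (hscore : ∀ s, Function.Injective (score s))
    (qo : σ → ℕ) (q : σ → ρ → ℕ)
    (t : α → Option ρ)
    (ui : α → Option σ → ℕ) (hui : ∀ j, Function.Injective (ui j))
    (i : α) (ui' : Option σ → ℕ) (hui' : Function.Injective ui')
    (τ' : Option ρ) (hτ' : τ' = t i ∨ τ' = none) :
    ui i (mu (daAssign acc score qo q
        (Function.update t i τ') (Function.update ui i ui')) i) ≤
      ui i (mu (daAssign acc score qo q t ui) i) := by
  rw [mu_daAssign, mu_daAssign]
  exact key_ic acc score hscore qo q t ui hui i ui' hui' τ' hτ'
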